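/- Let ξ and η be positive irrational real numbers and m a positive natural number with ξ·η = m. If the indices (n, k) with n ≥ 1 and k ≥ 1 are connected, i.e. p_{n−1}·P_{k−1} = m·q_{n−1}·Q_{k−1}, then n and k have different parity: (−1)^{k−1} = (−1)^n. -/

import Mathlib

/-- Complete quotients: `cq ξ 0 = ξ`, `cq ξ (n+1) = 1/(cq ξ n - ⌊cq ξ n⌋)`. -/
noncomputable def cq (ξ : ℝ) : ℕ → ℝ
  | 0 => ξ
  | n + 1 => 1 / (cq ξ n - ⌊cq ξ n⌋)

/-- Partial quotients: `pquot ξ n = b_n = ⌊ξ_n⌋`. -/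
noncomputable def pquot (ξ : ℝ) (n : ℕ) : ℤ := ⌊cq ξ n⌋

/-- Convergent numerators, shifted by one: `cnum ξ 0 = p_{-1} = 1`,
`cnum ξ 1 = p_0 = b_0`, and `cnum ξ (n+1) = p_n = b_n p_{n-1} + p_{n-2}`. -/
noncomputable def cnum (ξ : ℝ) : ℕ → ℤ
  | 0 => 1
  | 1 => pquot ξ 0
  | n + 2 => pquot ξ (n + 1) * cnum ξ (n + 1) + cnum ξ n

/-- Convergent denominators, shifted by one: `cden ξ 0 = q_{-1} = 0`,
`cden ξ 1 = q_0 = 1`, and `cden ξ (n+1) = q_n = b_n q_{n-1} + q_{n-2}`. -/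
noncomputable def cden (ξ : ℝ) : ℕ → ℤ
  | 0 => 0
  | 1 => 1
  | n + 2 => pquot ξ (n + 1) * cden ξ (n + 1) + cden ξ n

lemma cq_irrational {ξ : ℝ} (h : Irrational ξ) : ∀ n, Irrational (cq ξ n)
  | 0 => h
  | n + 1 => by
    have ih := cq_irrational h n
    have h1 : Irrational (cq ξ n - (⌊cq ξ n⌋ : ℝ)) := ih.sub_intCast _
    have := h1.inv
    simpa [cq, one_div] using this

lemma fract_cq_pos {ξ : ℝ} (h : Irrational ξ) (n : ℕ) :
    0 < cq ξ n - (⌊cq ξ n⌋ : ℝ) := by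
  have h1 := cq_irrational h n
  have : cq ξ n ≠ (⌊cq ξ n⌋ : ℝ) := h1.ne_int _
  have := Int.fract_pos.mpr this
  simpa [Int.self_sub_floor] using this

lemma cq_gt_one {ξ : ℝ} (h : Irrational ξ) (n : ℕ) : 1 < cq ξ (n + 1) := by
  have hp := fract_cq_pos h n
  have hl : cq ξ n - (⌊cq ξ n⌋ : ℝ) < 1 := by
    have := Int.fract_lt_one (cq ξ n)
    simpa [Int.self_sub_floor] using this
  rw [show cq ξ (n + 1) = 1 / (cq ξ n - (⌊cq ξ n⌋ : ℝ)) from rfl]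
  exact one_lt_one_div hp hl

lemma cq_pos_succ {ξ : ℝ} (h : Irrational ξ) (n : ℕ) : 0 < cq ξ (n + 1) :=
  lt_trans one_pos (cq_gt_one h n)

lemma pquot_ge_one {ξ : ℝ} (h : Irrational ξ) (n : ℕ) : 1 ≤ pquot ξ (n + 1) := by
  have := cq_gt_one h n
  unfold pquot
  exact Int.le_floor.mpr (by exact_mod_cast this.le)

lemma cden_nonneg {ξ : ℝ} (h : Irrational ξ) : ∀ n, 0 ≤ cden ξ n
  | 0 => le_refl 0
  | 1 => zero_le_one
  | n + 2 => by
    have h1 := cden_nonneg h (n + 1)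
    have h2 := cden_nonneg h n
    have h3 := pquot_ge_one h n
    show 0 ≤ pquot ξ (n + 1) * cden ξ (n + 1) + cden ξ n
    nlinarith

lemma cden_pos {ξ : ℝ} (h : Irrational ξ) : ∀ n, 0 < cden ξ (n + 1)
  | 0 => one_pos
  | n + 1 => by
    have h1 := cden_pos h n
    have h2 := cden_nonneg h n
    have h3 := pquot_ge_one h n
    show 0 < pquot ξ (n + 1) * cden ξ (n + 1) + cden ξ n
    nlinarith

lemma cnum_nonneg {ξ : ℝ} (hpos : 0 < ξ) (h : Irrational ξ) : ∀ n, 0 ≤ cnum ξ n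
  | 0 => zero_le_one
  | 1 => by
    show (0 : ℤ) ≤ ⌊cq ξ 0⌋
    exact Int.le_floor.mpr (by exact_mod_cast hpos.le)
  | n + 2 => by
    have h1 := cnum_nonneg hpos h (n + 1)
    have h2 := cnum_nonneg hpos h n
    have h3 := pquot_ge_one h n
    show 0 ≤ pquot ξ (n + 1) * cnum ξ (n + 1) + cnum ξ n
    nlinarith

/-- Key identity: `ξ_{n+1} (ξ q_n - p_n) = -(ξ q_{n-1} - p_{n-1})` in shifted indices. -/
lemma cq_key {ξ : ℝ} (h : Irrational ξ) : ∀ n,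
    cq ξ (n + 1) * (ξ * cden ξ (n + 1) - cnum ξ (n + 1))
      = -(ξ * cden ξ n - cnum ξ n)
  | 0 => by
    have hne : cq ξ 0 - (⌊cq ξ 0⌋ : ℝ) ≠ 0 := (fract_cq_pos h 0).ne'
    show (1 / (cq ξ 0 - (⌊cq ξ 0⌋ : ℝ))) * (ξ * (1 : ℤ) - (pquot ξ 0 : ℤ))
        = -(ξ * (0 : ℤ) - (1 : ℤ))
    have hcq0 : cq ξ 0 = ξ := rfl
    have hp : ((pquot ξ 0 : ℤ) : ℝ) = (⌊cq ξ 0⌋ : ℝ) := by rfl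
    push_cast
    rw [hp]
    field_simp
    rw [hcq0, Int.self_sub_floor]
    ring
  | n + 1 => by
    have ih := cq_key h n
    have hne : cq ξ (n + 1) - (⌊cq ξ (n + 1)⌋ : ℝ) ≠ 0 := (fract_cq_pos h (n + 1)).ne'
    have hcq : cq ξ (n + 2) * (cq ξ (n + 1) - (⌊cq ξ (n + 1)⌋ : ℝ)) = 1 := by
      show (1 / (cq ξ (n + 1) - (⌊cq ξ (n + 1)⌋ : ℝ))) * _ = 1
      rw [one_div, inv_mul_cancel₀ hne]
    have hd : (cden ξ (n + 2) : ℝ) = (pquot ξ (n + 1) : ℝ) * (cden ξ (n + 1) : ℝ)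
        + (cden ξ n : ℝ) := by
      show ((pquot ξ (n + 1) * cden ξ (n + 1) + cden ξ n : ℤ) : ℝ) = _
      push_cast; ring
    have hnum : (cnum ξ (n + 2) : ℝ) = (pquot ξ (n + 1) : ℝ) * (cnum ξ (n + 1) : ℝ)
        + (cnum ξ n : ℝ) := by
      show ((pquot ξ (n + 1) * cnum ξ (n + 1) + cnum ξ n : ℤ) : ℝ) = _
      push_cast; ring
    have hpq : ((pquot ξ (n + 1) : ℤ) : ℝ) = (⌊cq ξ (n + 1)⌋ : ℝ) := rfl
    rw [hd, hnum, hpq]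
    linear_combination cq ξ (n + 2) * ih - (ξ * (cden ξ (n + 1) : ℝ) - (cnum ξ (n + 1) : ℝ)) * hcq

/-- Sign of `p_{n-1} - ξ q_{n-1}` is `(-1)^n` (shifted indices). -/
lemma sign_lemma {ξ : ℝ} (h : Irrational ξ) : ∀ n,
    0 < (-1 : ℝ) ^ n * ((cnum ξ n : ℝ) - ξ * cden ξ n)
  | 0 => by norm_num [cnum, cden]
  | n + 1 => by
    have ih := sign_lemma h n
    have hk := cq_key h n
    have hc := cq_pos_succ h n
    have hF : ((cnum ξ (n + 1) : ℝ) - ξ * cden ξ (n + 1))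
        = -(((cnum ξ n : ℝ) - ξ * cden ξ n)) / cq ξ (n + 1) := by
      rw [eq_div_iff hc.ne']
      linear_combination -hk
    rw [hF, pow_succ]
    have h2 : 0 < ((-1 : ℝ) ^ n * ((cnum ξ n : ℝ) - ξ * cden ξ n)) / cq ξ (n + 1) :=
      div_pos ih hc
    have h3 : (-1 : ℝ) ^ n * -1 * (-(((cnum ξ n : ℝ) - ξ * cden ξ n)) / cq ξ (n + 1))
        = ((-1 : ℝ) ^ n * ((cnum ξ n : ℝ) - ξ * cden ξ n)) / cq ξ (n + 1) := by
      ring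
    rw [h3]
    exact h2

/-- Lemma 2.5: if `(n, k)` is connected then `n` and `k` have different
parity: `(-1)^(k-1) = (-1)^n`. -/
theorem connected_different_parity
    (ξ η : ℝ) (m : ℕ) (hξpos : 0 < ξ) (hηpos : 0 < η)
    (hξirr : Irrational ξ) (hηirr : Irrational η) (hm : 0 < m)
    (hmul : ξ * η = m) (n k : ℕ) (hn : 1 ≤ n) (hk : 1 ≤ k)
    (hconn : cnum ξ n * cnum η k = (m : ℤ) * cden ξ n * cden η k) :
    (-1 : ℤ) ^ (k - 1) = (-1 : ℤ) ^ n := by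
  obtain ⟨n', rfl⟩ : ∃ n', n = n' + 1 := ⟨n - 1, (Nat.succ_pred_eq_of_pos hn).symm⟩
  obtain ⟨k', rfl⟩ : ∃ k', k = k' + 1 := ⟨k - 1, (Nat.succ_pred_eq_of_pos hk).symm⟩
  set a := cnum ξ (n' + 1)
  set b := cden ξ (n' + 1)
  set A := cnum η (k' + 1)
  set B := cden η (k' + 1)
  have hb : 0 < b := cden_pos hξirr n'
  have hB : 0 < B := cden_pos hηirr k'
  have hA0 : 0 ≤ A := cnum_nonneg hηpos hηirr (k' + 1)
  have hA : 0 < A := by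
    rcases hA0.lt_or_eq with h | h
    · exact h
    · exfalso
      rw [← h] at hconn
      simp only [mul_zero] at hconn
      have : 0 < (m : ℤ) * b * B := by positivity
      omega
  -- real versions
  have hu := sign_lemma hξirr (n' + 1)
  have hv := sign_lemma hηirr (k' + 1)
  have hconnR : (a : ℝ) * A = ξ * η * b * B := by
    have := congrArg (fun z : ℤ => (z : ℝ)) hconn
    push_cast at this
    rw [this, hmul]
  set u : ℝ := (a : ℝ) - ξ * b with hu_def
  set v : ℝ := (A : ℝ) - η * B with hv_def
  have hkey : (A : ℝ) * u + ξ * (b : ℝ) * v = 0 := by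
    rw [hu_def, hv_def]
    nlinarith [hconnR]
  have hAR : (0 : ℝ) < A := by exact_mod_cast hA
  have hbR : (0 : ℝ) < b := by exact_mod_cast hb
  -- opposite parity in ℝ
  have hne : (-1 : ℝ) ^ (n' + 1) ≠ (-1 : ℝ) ^ (k' + 1) := by
    intro heq
    have h1 : 0 < (-1 : ℝ) ^ (n' + 1) * u := hu
    have h2 : 0 < (-1 : ℝ) ^ (n' + 1) * v := by rw [heq]; exact hv
    rcases neg_one_pow_eq_or ℝ (n' + 1) with hs | hs <;> rw [hs] at h1 h2
    · have h1' : 0 < u := by linarith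
      have h2' : 0 < v := by linarith
      nlinarith [mul_pos hAR h1', mul_pos (mul_pos hξpos hbR) h2']
    · have h1' : 0 < -u := by linarith
      have h2' : 0 < -v := by linarith
      nlinarith [mul_pos hAR h1', mul_pos (mul_pos hξpos hbR) h2']
  have hint : (-1 : ℤ) ^ (n' + 1) ≠ (-1 : ℤ) ^ (k' + 1) := by
    intro heq
    apply hne
    have := congrArg (fun z : ℤ => (z : ℝ)) heq
    push_cast at this
    exact this
  simp only [Nat.add_sub_cancel]
  have hk0 : ((-1 : ℤ)) ^ k' = -((-1 : ℤ)) ^ (k' + 1) := by rw [pow_succ]; ring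
  rw [hk0]
  rcases neg_one_pow_eq_or ℤ (n' + 1) with h1 | h1 <;>
    rcases neg_one_pow_eq_or ℤ (k' + 1) with h2 | h2 <;>
    rw [h1, h2] at hint ⊢ <;> omega
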